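/- Let F be a field and X an integral affine scheme of finite type over F, and let x ∈ X be a closed point. Then there exists a dense affine open subset U ⊆ X containing x such that the ring of sections 𝒪_X(U) is spanned by units. -/

import Mathlib

open AlgebraicGeometry CategoryTheory Opposite

universe u

/-- A commutative ring is *spanned by units* if every element is a finite
(possibly empty) sum of units. -/
def SpannedByUnits (R : Type*) [CommRing R] : Prop :=
  ∀ x : R, ∃ s : Multiset Rˣ, (s.map (fun u => (u : R))).sum = x

lemma sumUnits_neg {S : Type*} [CommRing S] (m : Multiset Sˣ) :
    ((m.map (fun u => -u)).map Units.val).sum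
      = -((m.map Units.val).sum) := by
  induction m using Multiset.induction_on with
  | empty => simp
  | cons u m ih =>
    simp only [Multiset.map_cons, Multiset.sum_cons, ih, Units.val_neg]
    ring

lemma sumUnits_mul {S : Type*} [CommRing S] (m n : Multiset Sˣ) :
    ((m.bind (fun u => n.map (fun v => u * v))).map Units.val).sum
      = (m.map Units.val).sum * (n.map Units.val).sum := by
  induction m using Multiset.induction_on with
  | empty => simp
  | cons u m ih =>
    simp only [Multiset.cons_bind, Multiset.map_add, Multiset.sum_add, ih,
      Multiset.map_cons, Multiset.sum_cons, Multiset.map_map, Function.comp_def,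
      Units.val_mul, add_mul]
    congr 1
    rw [Multiset.sum_map_mul_left]

/-- The subring of sums of units. -/
def sumUnitsSubring (S : Type*) [CommRing S] : Subring S where
  carrier := {x | ∃ m : Multiset Sˣ, (m.map Units.val).sum = x}
  zero_mem' := ⟨0, rfl⟩
  one_mem' := ⟨{1}, by simp⟩
  add_mem' := by rintro a b ⟨m, rfl⟩ ⟨n, rfl⟩; exact ⟨m + n, by simp⟩
  neg_mem' := by
    rintro a ⟨m, rfl⟩
    exact ⟨m.map (fun u => -u), sumUnits_neg m⟩
  mul_mem' := by
    rintro a b ⟨m, rfl⟩ ⟨n, rfl⟩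
    exact ⟨m.bind (fun u => n.map (fun v => u * v)), sumUnits_mul m n⟩

lemma mem_sumUnitsSubring {S : Type*} [CommRing S] {y : S} (h : IsUnit y) :
    y ∈ sumUnitsSubring S := ⟨{h.unit}, by simp⟩

lemma ringEquiv_finiteType {A B : Type*} [CommRing A] [CommRing B] (e : A ≃+* B) :
    e.toRingHom.FiniteType := by
  have := RingHom.FiniteType.comp_surjective (g := e.toRingHom)
    (RingHom.FiniteType.id A) e.surjective
  rwa [RingHom.comp_id] at this

theorem core_spanned {F R : Type*} [Field F] [CommRing R] (φ : F →+* R)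
    (hφ : φ.FiniteType) (p : Ideal R) [hp : p.IsPrime] :
    ∃ g : R, g ∉ p ∧ ∀ (S : Type*) [CommRing S] [Algebra R S] [IsLocalization.Away g S],
      SpannedByUnits S := by
  classical
  letI := φ.toAlgebra
  obtain ⟨s, hs⟩ := hφ
  refine ⟨∏ a ∈ s, (if a ∈ p then a - 1 else a), ?_, ?_⟩
  · intro h
    obtain ⟨a, -, ha⟩ := (Ideal.IsPrime.prod_mem_iff).mp h
    by_cases hap : a ∈ p
    · rw [if_pos hap] at ha
      exact hp.ne_top (Ideal.eq_top_iff_one p |>.mpr (by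
        have := p.sub_mem hap ha; simpa using this))
    · rw [if_neg hap] at ha; exact hap ha
  · intro S _ _ _
    set g : R := ∏ a ∈ s, (if a ∈ p then a - 1 else a) with hgdef
    have hgu : IsUnit (algebraMap R S g) := IsLocalization.Away.algebraMap_isUnit g
    set T := sumUnitsSubring S with hT
    have halg : ∀ r : R, algebraMap R S r ∈ T := by
      intro r
      have hr : r ∈ (Algebra.adjoin F (s : Set R)).toSubring := by
        rw [hs]; trivial
      rw [Algebra.adjoin_eq_ring_closure] at hr
      have hle : Subring.closure (Set.range (algebraMap F R) ∪ (s : Set R)) ≤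
          T.comap (algebraMap R S) := by
        rw [Subring.closure_le]
        rintro r (⟨c, rfl⟩ | hrs)
        · simp only [SetLike.mem_coe, Subring.mem_comap]
          by_cases hc : c = 0
          · subst hc; simp only [map_zero]; exact T.zero_mem
          · exact mem_sumUnitsSubring
              ((isUnit_iff_ne_zero.mpr hc).map ((algebraMap R S).comp (algebraMap F R)))
        · simp only [SetLike.mem_coe, Subring.mem_comap]
          have hdvd : (if r ∈ p then r - 1 else r) ∣ g :=
            Finset.dvd_prod_of_mem _ hrs
          have hbu : IsUnit (algebraMap R S (if r ∈ p then r - 1 else r)) :=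
            isUnit_of_dvd_unit (map_dvd _ hdvd) hgu
          by_cases hrp : r ∈ p
          · rw [if_pos hrp] at hbu
            have : algebraMap R S r = algebraMap R S (r - 1) + 1 := by
              rw [map_sub, map_one]; ring
            rw [this]
            exact T.add_mem (mem_sumUnitsSubring hbu) T.one_mem
          · rw [if_neg hrp] at hbu
            exact mem_sumUnitsSubring hbu
      exact hle hr
    intro y
    obtain ⟨⟨r, m⟩, hy⟩ := IsLocalization.surj (Submonoid.powers g) y
    have hmu : IsUnit (algebraMap R S (m : R)) := IsLocalization.map_units S m
    have hy' : y = algebraMap R S r * ↑hmu.unit⁻¹ := by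
      rw [← hy, mul_assoc]
      have h1 : (algebraMap R S) (m : R) * ↑hmu.unit⁻¹ = 1 := by
        exact hmu.mul_val_inv
      rw [h1, mul_one]
    have hyT : y ∈ T := by
      rw [hy']
      exact T.mul_mem (halg r) (mem_sumUnitsSubring (hmu.unit⁻¹).isUnit)
    obtain ⟨mm, hmm⟩ := hyT
    exact ⟨mm, by simpa using hmm⟩

/-- Let `X` be an integral affine scheme of finite type over a field `F`, and let `x ∈ X`
be a closed point.  Then there is a dense affine open `U ⊆ X` containing `x` such that
`𝒪_X(U)` is spanned by units. -/
theorem exists_dense_affine_open_spannedByUnits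
    (F : Type u) [Field F] (X : Scheme.{u}) (f : X ⟶ Spec (CommRingCat.of F))
    [IsIntegral X] [IsAffine X] [LocallyOfFiniteType f] [QuasiCompact f]
    (x : X) (hx : IsClosed ({x} : Set X)) :
    ∃ U : X.Opens, IsAffineOpen U ∧ Dense (U : Set X) ∧ x ∈ U ∧
      SpannedByUnits Γ(X, U) := by
  have hfin : RingHom.FiniteType (f.appTop.hom) :=
    (HasRingHomProperty.iff_of_isAffine (P := @LocallyOfFiniteType)).mp ‹_›
  let e : F ≃+* Γ(Spec (CommRingCat.of F), ⊤) :=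
    (Scheme.ΓSpecIso (CommRingCat.of F)).commRingCatIsoToRingEquiv.symm
  let φ : F →+* Γ(X, ⊤) := f.appTop.hom.comp e.toRingHom
  have hφ : φ.FiniteType := RingHom.FiniteType.comp hfin (ringEquiv_finiteType e)
  obtain ⟨g, hg, H⟩ := core_spanned φ hφ (X.toSpecΓ.base x).asIdeal (hp := PrimeSpectrum.isPrime _)
  have hmem : x ∈ X.basicOpen g := by
    rw [← Scheme.toSpecΓ_preimage_basicOpen]
    exact hg
  refine ⟨X.basicOpen g, (isAffineOpen_top X).basicOpen g, ?_, hmem, ?_⟩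
  · refine (X.basicOpen g).isOpen.dense ?_
    exact ⟨x, hmem⟩
  · exact H Γ(X, X.basicOpen g)
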